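/- Let V be an n-dimensional vector space, A an endomorphism with cyclic vector e, and W an auxiliary finite-dimensional vector space. The map M_A sending a symmetric bilinear W-valued map S with S(e,·)=0 to the alternating W-valued map (Y,Z) ↦ S(Y,AZ) − S(Z,AY) is injective on {S : V×V → W symmetric bilinear, S(e,·)=0}. -/

import Mathlib

/-- Vector-valued cyclic injectivity: a symmetric `W`-valued bilinear map `S` with
`S e = 0` and `S Y (A Z) = S Z (A Y)` vanishes, when `e` is cyclic for `A`. -/
theorem stmt2 {K V W : Type*} [Field K] [AddCommGroup V] [Module K V]
    [AddCommGroup W] [Module K W] {n : ℕ}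
    (A : Module.End K V) (e : V)
    (bas : Module.Basis (Fin n) K V) (hbas : ∀ i : Fin n, bas i = (A ^ (i : ℕ)) e)
    (S : V →ₗ[K] V →ₗ[K] W)
    (hsymm : ∀ x y, S x y = S y x)
    (he : ∀ z, S e z = 0)
    (hA : ∀ y z, S y (A z) = S z (A y)) :
    S = 0 := by
  have key : ∀ j i : ℕ, S ((A ^ i) e) ((A ^ j) e) = 0 := by
    intro j
    induction j with
    | zero => intro i; simpa using (hsymm _ _).trans (he _)
    | succ j ih =>
      intro i
      have h1 : S ((A ^ i) e) ((A ^ (j + 1)) e) = S ((A ^ j) e) ((A ^ (i + 1)) e) := by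
        have := hA ((A ^ i) e) ((A ^ j) e)
        simpa [pow_succ', Module.End.mul_apply] using this
      rw [h1, hsymm]
      exact ih (i + 1)
  apply bas.ext
  intro i
  apply bas.ext
  intro j
  simp [hbas, key]
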